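/- For a conditionally decreasing sequence of partitions: if ξ_n is a decreasing sequence of finite measurable partitions of a probability space with ξ_n ↘ ζ (the σ-algebras generated decrease to that of ζ), and η is a measurable partition with H_μ(ξ_n | η) < ∞, then the conditional entropies converge: H_μ(ξ_n | η) ↘ H_μ(ζ | η). -/

import Mathlib

open MeasureTheory Filter
open scoped ENNReal

/-- Conditional entropy `H_μ(P | Q)` of the countable partition given by the
fibers of `P` relative to the countable partition given by the fibers of `Q`:
`∑_j μ(Q=j) ∑_i φ(μ(P=i ∩ Q=j)/μ(Q=j))` with `φ(t) = -t log t`. -/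
noncomputable def condEntPart {X : Type*} [MeasurableSpace X] (μ : Measure X)
    (P Q : X → ℕ) : ℝ≥0∞ :=
  ∑' j : ℕ, ∑' i : ℕ,
    μ (Q ⁻¹' {j}) * ENNReal.ofReal (Real.negMulLog
      ((μ (P ⁻¹' {i} ∩ Q ⁻¹' {j})).toReal / (μ (Q ⁻¹' {j})).toReal))

private lemma negMulLog_add_le {a b : ℝ} (ha : 0 ≤ a) (hb : 0 ≤ b) :
    Real.negMulLog (a + b) ≤ Real.negMulLog a + Real.negMulLog b := by
  have key : ∀ x y : ℝ, 0 ≤ x → 0 ≤ y → -(x * Real.log (x + y)) ≤ Real.negMulLog x := by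
    intro x y hx hy
    rcases hx.eq_or_lt with h | h
    · simp [← h, Real.negMulLog]
    · rw [Real.negMulLog, neg_mul]
      exact neg_le_neg (mul_le_mul_of_nonneg_left (Real.log_le_log h (by linarith)) hx)
  have hexp : Real.negMulLog (a + b)
      = -(a * Real.log (a + b)) + -(b * Real.log (a + b)) := by
    rw [Real.negMulLog, neg_mul]; ring
  rw [hexp]
  exact add_le_add (key a b ha hb) (by simpa [add_comm] using key b a hb ha)

private lemma negMulLog_sum_le {ι : Type*} (s : Finset ι) (x : ι → ℝ)
    (hx : ∀ i ∈ s, 0 ≤ x i) :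
    Real.negMulLog (∑ i ∈ s, x i) ≤ ∑ i ∈ s, Real.negMulLog (x i) := by
  classical
  induction s using Finset.cons_induction with
  | empty => simp
  | cons i s his ih =>
    rw [Finset.sum_cons, Finset.sum_cons]
    calc Real.negMulLog (x i + ∑ j ∈ s, x j)
        ≤ Real.negMulLog (x i) + Real.negMulLog (∑ j ∈ s, x j) :=
          negMulLog_add_le (hx i (Finset.mem_cons_self _ _))
            (Finset.sum_nonneg fun j hj => hx j (Finset.mem_cons_of_mem hj))
      _ ≤ _ := add_le_add le_rfl (ih fun j hj => hx j (Finset.mem_cons_of_mem hj))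

/-- the basic entropy summand, in `ℝ≥0∞`. -/
noncomputable def phiE (c m : ℝ≥0∞) : ℝ≥0∞ :=
  ENNReal.ofReal (Real.negMulLog (m.toReal / c.toReal))

@[simp] private lemma phiE_zero (c : ℝ≥0∞) : phiE c 0 = 0 := by
  simp [phiE]

private lemma phiE_tsum_le {c : ℝ≥0∞} (hc : c ≠ ∞) (t : ℕ → ℝ≥0∞)
    (hfin : (Function.support t).Finite) (hle : ∑' i, t i ≤ c) :
    phiE c (∑' i, t i) ≤ ∑' i, phiE c (t i) := by
  rcases eq_or_ne c 0 with rfl | hc0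
  · have ht : ∀ i, t i = 0 := fun i =>
      le_antisymm (le_trans (ENNReal.le_tsum i) hle) (by simp)
    simp [ht]
  · classical
    set s := hfin.toFinset with hs
    have hts : ∑' i, t i = ∑ i ∈ s, t i := by
      refine tsum_eq_sum fun b hb => ?_
      have := hfin.mem_toFinset.not.mp hb
      simpa [Function.mem_support] using this
    have htne : ∀ i ∈ s, t i ≠ ∞ := fun i _ =>
      ne_top_of_le_ne_top hc (le_trans (ENNReal.le_tsum i) hle)
    have hy1 : ∀ i ∈ s, (t i).toReal / c.toReal ≤ 1 := by
      intro i _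
      have hile : t i ≤ c := le_trans (ENNReal.le_tsum i) hle
      have := ENNReal.toReal_mono hc hile
      exact div_le_one_of_le₀ this ENNReal.toReal_nonneg
    have key : phiE c (∑ i ∈ s, t i) ≤ ∑ i ∈ s, phiE c (t i) := by
      unfold phiE
      rw [ENNReal.toReal_sum htne, Finset.sum_div]
      calc ENNReal.ofReal (Real.negMulLog (∑ i ∈ s, (t i).toReal / c.toReal))
          ≤ ENNReal.ofReal (∑ i ∈ s, Real.negMulLog ((t i).toReal / c.toReal)) := by
            apply ENNReal.ofReal_le_ofReal
            exact negMulLog_sum_le s _ fun i _ =>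
              div_nonneg ENNReal.toReal_nonneg ENNReal.toReal_nonneg
        _ = ∑ i ∈ s, ENNReal.ofReal (Real.negMulLog ((t i).toReal / c.toReal)) := by
            refine ENNReal.ofReal_sum_of_nonneg fun i hi => ?_
            exact Real.negMulLog_nonneg
              (div_nonneg ENNReal.toReal_nonneg ENNReal.toReal_nonneg) (hy1 i hi)
    calc phiE c (∑' i, t i) = phiE c (∑ i ∈ s, t i) := by rw [hts]
      _ ≤ ∑ i ∈ s, phiE c (t i) := key
      _ ≤ ∑' i, phiE c (t i) := ENNReal.sum_le_tsum s

private lemma condEntPart_eq {X : Type*} [MeasurableSpace X] (μ : Measure X)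
    (P Q : X → ℕ) :
    condEntPart μ P Q = ∑' j : ℕ, μ (Q ⁻¹' {j}) *
      ∑' i : ℕ, phiE (μ (Q ⁻¹' {j})) (μ (P ⁻¹' {i} ∩ Q ⁻¹' {j})) := by
  unfold condEntPart phiE
  exact tsum_congr fun j => (ENNReal.tsum_mul_left).symm ▸ rfl

private lemma condEntPart_comp_le {X : Type*} [MeasurableSpace X] (μ : Measure X)
    [IsProbabilityMeasure μ] (ξ : X → ℕ) (g : ℕ → ℕ) (η : X → ℕ)
    (hξ : Measurable ξ) (hη : Measurable η) (hfin : (Set.range ξ).Finite) :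
    condEntPart μ (g ∘ ξ) η ≤ condEntPart μ ξ η := by
  classical
  rw [condEntPart_eq, condEntPart_eq]
  refine ENNReal.tsum_le_tsum fun j => mul_le_mul_right ?_ _
  set c := μ (η ⁻¹' {j}) with hcdef
  have hc : c ≠ ∞ := measure_ne_top μ _
  set t : ℕ → ℝ≥0∞ := fun i => μ (ξ ⁻¹' {i} ∩ η ⁻¹' {j}) with htdef
  have hsupp : Function.support t ⊆ Set.range ξ := by
    intro i hi
    by_contra h
    apply hi
    have hemp : ξ ⁻¹' {i} = ∅ := by
      ext x
      simp only [Set.mem_preimage, Set.mem_singleton_iff, Set.mem_empty_iff_false, iff_false]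
      exact fun hx => h ⟨x, hx⟩
    simp [htdef, hemp]
  have hsuppfin : (Function.support t).Finite := hfin.subset hsupp
  have step1 : ∀ k : ℕ, μ ((g ∘ ξ) ⁻¹' {k} ∩ η ⁻¹' {j})
      = ∑' i, (if g i = k then t i else 0) := by
    intro k
    set A : ℕ → Set X := fun i => if g i = k then ξ ⁻¹' {i} ∩ η ⁻¹' {j} else ∅ with hA
    have hun : (g ∘ ξ) ⁻¹' {k} ∩ η ⁻¹' {j} = ⋃ i, A i := by
      ext x
      simp only [Set.mem_inter_iff, Set.mem_preimage, Function.comp_apply,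
        Set.mem_singleton_iff, Set.mem_iUnion, hA]
      constructor
      · rintro ⟨h1, h2⟩
        exact ⟨ξ x, by simp [h1, h2]⟩
      · rintro ⟨i, hi⟩
        by_cases hgi : g i = k
        · rw [if_pos hgi] at hi
          obtain ⟨hix, hjx⟩ := hi
          simp only [Set.mem_preimage, Set.mem_singleton_iff] at hix hjx
          exact ⟨hix ▸ hgi, hjx⟩
        · rw [if_neg hgi] at hi; exact absurd hi (Set.notMem_empty x)
    have hmeas : ∀ i, MeasurableSet (A i) := by
      intro i
      by_cases hgi : g i = k
      · rw [hA]; simp only [if_pos hgi]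
        exact (hξ (measurableSet_singleton i)).inter (hη (measurableSet_singleton j))
      · rw [hA]; simp only [if_neg hgi]; exact MeasurableSet.empty
    have hdisj : Pairwise (Function.onFun Disjoint A) := by
      intro a b hab
      refine Set.disjoint_left.2 fun x hxa hxb => ?_
      simp only [hA] at hxa hxb
      split_ifs at hxa hxb
      · exact hab (by
          have h1 : ξ x = a := hxa.1
          have h2 : ξ x = b := hxb.1
          rw [← h1, h2])
      all_goals simp_all
    rw [hun, measure_iUnion hdisj hmeas]
    refine tsum_congr fun i => ?_
    by_cases hgi : g i = k
    · simp [hA, hgi, htdef]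
    · simp [hA, hgi]
  calc ∑' k, phiE c (μ ((g ∘ ξ) ⁻¹' {k} ∩ η ⁻¹' {j}))
      ≤ ∑' k, ∑' i, phiE c (if g i = k then t i else 0) := by
        refine ENNReal.tsum_le_tsum fun k => ?_
        rw [step1 k]
        refine phiE_tsum_le hc _ (hsuppfin.subset ?_) ?_
        · intro i hi
          simp only [Function.mem_support] at hi ⊢
          intro h0; apply hi; split_ifs <;> simp [h0]
        · rw [← step1 k]
          exact measure_mono Set.inter_subset_right
    _ = ∑' i, phiE c (t i) := by
        rw [ENNReal.tsum_comm]
        refine tsum_congr fun i => ?_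
        have : (fun k => phiE c (if g i = k then t i else 0))
            = fun k => if k = g i then phiE c (t i) else 0 := by
          funext k
          by_cases hk : g i = k
          · simp [hk]
          · simp [hk, Ne.symm hk]
        rw [this, tsum_ite_eq]

private lemma exists_comp_of_comap_le {X : Type*} (e f : X → ℕ)
    (h : MeasurableSpace.comap f ⊤ ≤ MeasurableSpace.comap e ⊤) :
    ∃ g : ℕ → ℕ, f = g ∘ e := by
  classical
  have key : ∀ x y, e x = e y → f x = f y := by
    intro x y hxy
    have hm : MeasurableSet[MeasurableSpace.comap e ⊤] (f ⁻¹' {f x}) :=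
      h _ ⟨{f x}, trivial, rfl⟩
    obtain ⟨T, -, hT⟩ := hm
    have hx : x ∈ e ⁻¹' T := by
      rw [hT]; exact rfl
    have hy : y ∈ e ⁻¹' T := by rwa [Set.mem_preimage, ← hxy]
    rw [hT] at hy
    exact (Set.mem_singleton_iff.mp hy).symm
  refine ⟨fun i => if h : ∃ x, e x = i then f h.choose else 0, funext fun x => ?_⟩
  have h' : ∃ y, e y = e x := ⟨x, rfl⟩
  simp only [Function.comp_apply, dif_pos h']
  exact (key _ x h'.choose_spec).symm

private lemma range_comap_finite {X : Type*} (ξ : ℕ → X → ℕ)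
    (hfin0 : (Set.range (ξ 0)).Finite)
    (hanti : Antitone fun n => MeasurableSpace.comap (ξ n) ⊤) :
    (Set.range fun n => MeasurableSpace.comap (ξ n) ⊤).Finite := by
  classical
  have : Finite ↥(Set.range (ξ 0)) := hfin0.to_subtype
  set C : Set (Set X) :=
    Set.range (fun T : Set (Set.range (ξ 0)) => (ξ 0) ⁻¹' ((↑) '' T)) with hC
  have hCfin : C.Finite := Set.finite_range _
  have hmem : ∀ n s, MeasurableSet[MeasurableSpace.comap (ξ n) ⊤] s → s ∈ C := by
    intro n s hs
    have hle : MeasurableSpace.comap (ξ n) ⊤ ≤ MeasurableSpace.comap (ξ 0) ⊤ :=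
      hanti (Nat.zero_le n)
    obtain ⟨T, -, hT⟩ := hle _ hs
    refine ⟨Subtype.val ⁻¹' T, ?_⟩
    rw [← hT]
    ext x
    simp only [Set.mem_preimage, Set.mem_image]
    constructor
    · rintro ⟨⟨y, hy⟩, hyT, hyx⟩
      simpa [← hyx] using hyT
    · intro hx
      exact ⟨⟨ξ 0 x, ⟨x, rfl⟩⟩, hx, rfl⟩
  have hinj : Function.Injective
      (fun m : MeasurableSpace X => {s : Set X | MeasurableSet[m] s}) := by
    intro m1 m2 h
    refine MeasurableSpace.ext fun s => ?_
    constructor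
    · intro hs; exact (Set.ext_iff.mp h s).mp hs
    · intro hs; exact (Set.ext_iff.mp h s).mpr hs
  apply Set.Finite.of_finite_image ?_ hinj.injOn
  have himg : (fun m : MeasurableSpace X => {s : Set X | MeasurableSet[m] s}) ''
      (Set.range fun n => MeasurableSpace.comap (ξ n) ⊤)
      ⊆ {t | t ⊆ C} := by
    rintro t ⟨m, ⟨n, rfl⟩, rfl⟩
    intro s hs
    exact hmem n s hs
  exact hCfin.finite_subsets.subset himg

/-- If `ξ n` is a sequence of finite measurable partitions whose generated
σ-algebras decrease to that of the partition `ζ` (i.e. `ξ_n ↘ ζ`), and `η` is a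
measurable partition with `H_μ(ξ_n | η) < ∞`, then `H_μ(ξ_n | η) ↘ H_μ(ζ | η)`. -/
theorem stmt12 {X : Type*} [MeasurableSpace X] (μ : Measure X) [IsProbabilityMeasure μ]
    (ξ : ℕ → X → ℕ) (ζ η : X → ℕ)
    (hξ : ∀ n, Measurable (ξ n)) (hζ : Measurable ζ) (hη : Measurable η)
    (hfin : ∀ n, (Set.range (ξ n)).Finite)
    (hanti : Antitone fun n => MeasurableSpace.comap (ξ n) ⊤)
    (hlim : (⨅ n, MeasurableSpace.comap (ξ n) ⊤) = MeasurableSpace.comap ζ ⊤)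
    (hH : ∀ n, condEntPart μ (ξ n) η < ⊤) :
    Antitone (fun n => condEntPart μ (ξ n) η) ∧
      Tendsto (fun n => condEntPart μ (ξ n) η) atTop (nhds (condEntPart μ ζ η)) := by
  set F : ℕ → MeasurableSpace X := fun n => MeasurableSpace.comap (ξ n) ⊤ with hF
  -- range of ζ is finite
  have hζfin : (Set.range ζ).Finite := by
    obtain ⟨g0, hg0⟩ := exists_comp_of_comap_le (ξ 0) ζ (hlim ▸ iInf_le F 0)
    rw [hg0, Set.range_comp]
    exact ((hfin 0).image g0)
  -- antitonicity
  have hA : Antitone (fun n => condEntPart μ (ξ n) η) := by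
    intro a b hab
    obtain ⟨g, hg⟩ := exists_comp_of_comap_le (ξ a) (ξ b) (hanti hab)
    simp only
    rw [hg]
    exact condEntPart_comp_le μ (ξ a) g η (hξ a) hη (hfin a)
  refine ⟨hA, ?_⟩
  -- stabilization
  obtain ⟨mσ, ⟨N, hNm⟩, hmin'⟩ :=
    (range_comap_finite ξ (hfin 0) hanti).exists_minimalFor id _ ⟨F 0, 0, rfl⟩
  have hmin : ∀ a' ∈ Set.range F, id a' ≤ id mσ → id mσ = id a' :=
    fun a' ha' h => le_antisymm (hmin' ha' h) h
  subst hNm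
  simp only [id] at hmin
  have hstab : ∀ n, N ≤ n → F n = F N := fun n hn =>
    (hmin (F n) ⟨n, rfl⟩ (hanti hn)).symm
  have hNle : ∀ n, F N ≤ F n := fun n => (le_total n N).elim
    (fun h' => hanti h') (fun h' => le_of_eq (hstab n h').symm)
  have hFN : F N = MeasurableSpace.comap ζ ⊤ := by
    rw [← hlim]
    exact le_antisymm (le_iInf hNle) (iInf_le F N)
  have hEq : ∀ n, N ≤ n → F n = MeasurableSpace.comap ζ ⊤ := fun n hn =>
    (hstab n hn).trans hFN
  -- eventually constant
  apply tendsto_atTop_of_eventually_const (i₀ := N)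
  intro n hn
  have h1 : MeasurableSpace.comap ζ ⊤ ≤ F n := le_of_eq (hEq n hn).symm
  have h2 : F n ≤ MeasurableSpace.comap ζ ⊤ := le_of_eq (hEq n hn)
  obtain ⟨g, hg⟩ := exists_comp_of_comap_le (ξ n) ζ h1
  obtain ⟨h, hh⟩ := exists_comp_of_comap_le ζ (ξ n) h2
  refine le_antisymm ?_ ?_
  · rw [hh]
    exact condEntPart_comp_le μ ζ h η hζ hη hζfin
  · rw [hg]
    exact condEntPart_comp_le μ (ξ n) g η (hξ n) hη (hfin n)
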